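/- Let n ≥ 4 be even and let Ψ be an instance of {1,2}-CSP whose constraint graph G is connected and bipartite, and assume P_∞ ⊨ Ψ. Then P_n ⊨ Ψ if and only if there is no vertex v with γ(v) ≥ n/2. -/

import Mathlib

namespace CountingCSP

/-! ## The basic framework

An instance `Ψ` of `{1,2}`-CSP is modelled by a number `m` of variables, the variable set
being `Fin m` with its natural linear order `<` (the order of quantification `≺`), a function
`β : Fin m → ℕ` taking values in `{1,2}` (variable `v` is quantified by `∃^{≥ β v}`), and a
simple graph `G` on `Fin m` (the constraint graph).  A target graph is a type `B` together
with an adjacency relation `E : B → B → Prop` (loops allowed in general). -/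

/-- Adjacency of the finite path `P_n` on the vertices `{1,…,n}`, modelled as `Fin n`. -/
def pathAdj (n : ℕ) (i j : Fin n) : Prop :=
  (i : ℕ) + 1 = j ∨ (j : ℕ) + 1 = i

/-- Adjacency of the infinite path `P_∞` on `ℤ`: `i` and `j` adjacent iff `|i - j| = 1`. -/
def intPathAdj (i j : ℤ) : Prop := |i - j| = 1

/-- `SatFrom β G E i f` : processing the variables of the instance in `≺`-increasing order
starting from variable `i`, where the earlier variables have been assigned according to `f`,
the instance can be satisfied.  At each variable `v` one asks for a set `S` of `β v` distinct
elements of the target such that for every `b ∈ S` the rest of the instance can be satisfied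
with `v ↦ b`; when all variables are assigned, the assignment must be a homomorphism. -/
def SatFrom {m : ℕ} {B : Type*} (β : Fin m → ℕ) (G : SimpleGraph (Fin m))
    (E : B → B → Prop) (i : ℕ) (f : Fin m → B) : Prop :=
  if h : i < m then
    ∃ S : Finset B, S.card = β ⟨i, h⟩ ∧
      ∀ b ∈ S, SatFrom β G E (i + 1) (Function.update f ⟨i, h⟩ b)
  else ∀ u v : Fin m, G.Adj u v → E (f u) (f v)
termination_by m - i
decreasing_by omega

/-- `Sat β G E` : the instance with quantifiers `β` and constraint graph `G` is satisfied by
the target graph with adjacency `E`  (i.e. `H ⊨ Ψ`).  The initial assignment is irrelevant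
since every variable is assigned before it is used. -/
def Sat {m : ℕ} {B : Type*} (β : Fin m → ℕ) (G : SimpleGraph (Fin m))
    (E : B → B → Prop) : Prop :=
  ∀ f : Fin m → B, SatFrom β G E 0 f

/-- A graph is bipartite iff it has a proper 2-colouring. -/
def Bipartite {V : Type*} (G : SimpleGraph V) : Prop :=
  ∃ c : V → Bool, ∀ u v, G.Adj u v → c u ≠ c v

/-! ## Walks, looping walks, and the distance function δ -/

/-- `λ(Q) = |Q| − 2·∑_{interior vertices x of Q} (β x − 1)`, where `|Q|` is the length
(number of edges) of the walk `Q = x₁,…,x_r`, and the interior vertices are `x₂,…,x_{r−1}`. -/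
def lamWalk {m : ℕ} (β : Fin m → ℕ) (Q : List (Fin m)) : ℤ :=
  ((Q.length : ℤ) - 1) - 2 * (((Q.drop 1).dropLast).map (fun x => (β x : ℤ) - 1)).sum

/-- Looping walks of `G` (with respect to the quantification order `<` on `Fin m`):
a walk `x₁,…,x_r` with `x₁ ≠ x_r` such that if `r ≥ 3` then both endpoints strictly precede
every interior vertex and the walk splits at some interior position into two looping walks. -/
inductive IsLoopingWalk {m : ℕ} (G : SimpleGraph (Fin m)) : List (Fin m) → Prop
  | base {x y : Fin m} : G.Adj x y → IsLoopingWalk G [x, y]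
  | comb {x y z : Fin m} {Q₁ Q₂ : List (Fin m)} :
      IsLoopingWalk G (x :: (Q₁ ++ [y])) →
      IsLoopingWalk G (y :: (Q₂ ++ [z])) →
      x ≠ z →
      (∀ w ∈ Q₁ ++ y :: Q₂, x < w ∧ z < w) →
      IsLoopingWalk G (x :: (Q₁ ++ y :: Q₂ ++ [z]))

/-- `Q` is a looping walk between `u` and `v` (in either direction). -/
def LoopingWalkBetween {m : ℕ} (G : SimpleGraph (Fin m)) (u v : Fin m)
    (Q : List (Fin m)) : Prop :=
  IsLoopingWalk G Q ∧
    ((Q.head? = some u ∧ Q.getLast? = some v) ∨ (Q.head? = some v ∧ Q.getLast? = some u))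

/-- `IsDelta G β u v d` : `d = δ(u,v)`, i.e. `d` is the minimum of `λ(Q)` over all looping
walks `Q` of `G` between `u` and `v`.  (`δ(u,v) < ∞` corresponds to `∃ d, IsDelta G β u v d`.) -/
def IsDelta {m : ℕ} (G : SimpleGraph (Fin m)) (β : Fin m → ℕ) (u v : Fin m) (d : ℤ) : Prop :=
  (∃ Q, LoopingWalkBetween G u v Q ∧ lamWalk β Q = d) ∧
    ∀ Q, LoopingWalkBetween G u v Q → d ≤ lamWalk β Q

/-! ## The functions γ and γ′ -/

/-- `IsGammaVal G β g v t` : `t = max(0, max_{u ≺ v, δ(u,v) < ∞} (g u − δ(u,v) + β v − 1))`. -/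
def IsGammaVal {m : ℕ} (G : SimpleGraph (Fin m)) (β : Fin m → ℕ) (g : Fin m → ℤ)
    (v : Fin m) (t : ℤ) : Prop :=
  0 ≤ t ∧
  (∀ u, u < v → ∀ d, IsDelta G β u v d → g u - d + (β v : ℤ) - 1 ≤ t) ∧
  (t = 0 ∨ ∃ u, u < v ∧ ∃ d, IsDelta G β u v d ∧ t = g u - d + (β v : ℤ) - 1)

/-- `g` is the function `γ`: `γ(v) = 0` for the `≺`-least vertex, and otherwise
`γ(v) = β(v) − 1 + max(0, max_{u ≺ v, δ(u,v) < ∞} (γ(u) − δ(u,v) + β(v) − 1))`. -/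
def IsGamma {m : ℕ} (G : SimpleGraph (Fin m)) (β : Fin m → ℕ) (g : Fin m → ℤ) : Prop :=
  ∀ v : Fin m,
    if (v : ℕ) = 0 then g v = 0
    else ∃ t, IsGammaVal G β g v t ∧ g v = (β v : ℤ) - 1 + t

/-- `g` is the function `γ′`:
`γ′(v) = β(v) − 1 + max(0, max_{u ≺ v, δ(u,v) < ∞} (γ′(u) − δ(u,v) + β(v) − 1))`
(so `γ′(v) = β(v) − 1` for the `≺`-least vertex). -/
def IsGamma' {m : ℕ} (G : SimpleGraph (Fin m)) (β : Fin m → ℕ) (g : Fin m → ℤ) : Prop :=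
  ∀ v : Fin m, ∃ t, IsGammaVal G β g v t ∧ g v = (β v : ℤ) - 1 + t

/-! ## The closure sets (F, R⁺, R⁻) for the {2}-CSP(K₄) algorithm -/

mutual
/-- Membership in the closure set `F` of pairs (initialised as the edge set of `G`). -/
inductive InF {m : ℕ} (G : SimpleGraph (Fin m)) : Finset (Fin m) → Prop
  | edge {x y : Fin m} : G.Adj x y → InF G {x, y}
  | x3a {x y w z : Fin m} : [x, y, w, z].Pairwise (· ≠ ·) →
      x < z → y < z → w < z → ¬(x < w ∧ y < w) →
      InF G {w, z} → InRp G {x, y, z} → InF G {x, w}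
  | x3b {x y w z : Fin m} : [x, y, w, z].Pairwise (· ≠ ·) →
      x < z → y < z → w < z → ¬(x < w ∧ y < w) →
      InF G {w, z} → InRp G {x, y, z} → InF G {y, w}
  | x4 {x y w z : Fin m} : [x, y, w, z].Pairwise (· ≠ ·) →
      x < y → w < y → y < z →
      InRp G {x, y, z} → InRm G {w, y, z} → InF G {x, w}
  | x7a {x y q w z : Fin m} : [x, y, q, w, z].Pairwise (· ≠ ·) →
      x < q → y < q → w < q → q < z → ¬(x < w ∧ y < w) →
      InRp G {x, y, z} → InRm G {w, q, z} → InF G {x, w}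
  | x7a' {x y q w z : Fin m} : [x, y, q, w, z].Pairwise (· ≠ ·) →
      x < q → y < q → w < q → q < z → ¬(x < w ∧ y < w) →
      InRm G {x, y, z} → InRp G {w, q, z} → InF G {x, w}
  | x7b {x y q w z : Fin m} : [x, y, q, w, z].Pairwise (· ≠ ·) →
      x < q → y < q → w < q → q < z → ¬(x < w ∧ y < w) →
      InRp G {x, y, z} → InRm G {w, q, z} → InF G {y, w}
  | x7b' {x y q w z : Fin m} : [x, y, q, w, z].Pairwise (· ≠ ·) →
      x < q → y < q → w < q → q < z → ¬(x < w ∧ y < w) →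
      InRm G {x, y, z} → InRp G {w, q, z} → InF G {y, w}

/-- Membership in the closure set `R⁺` of triples. -/
inductive InRp {m : ℕ} (G : SimpleGraph (Fin m)) : Finset (Fin m) → Prop
  | x2 {x y w z : Fin m} : [x, y, w, z].Pairwise (· ≠ ·) →
      x < z → y < z → w < z →
      InF G {w, z} → InRm G {x, y, z} → InRp G {x, y, w}
  | x4 {x y w z : Fin m} : [x, y, w, z].Pairwise (· ≠ ·) →
      x < y → w < y → y < z →
      InRp G {x, y, z} → InRm G {w, y, z} → InRp G {x, y, w}
  | x5p {x y w z : Fin m} : [x, y, w, z].Pairwise (· ≠ ·) →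
      x < z → y < z → w < z →
      InRp G {x, y, z} → InRp G {w, y, z} → InRp G {x, y, w}
  | x5m {x y w z : Fin m} : [x, y, w, z].Pairwise (· ≠ ·) →
      x < z → y < z → w < z →
      InRm G {x, y, z} → InRm G {w, y, z} → InRp G {x, y, w}
  | x6ap {x y q w z : Fin m} : [x, y, q, w, z].Pairwise (· ≠ ·) →
      x < q → y < q → w < q → q < z →
      InRp G {x, y, z} → InRp G {w, q, z} → InRp G {x, y, w}
  | x6am {x y q w z : Fin m} : [x, y, q, w, z].Pairwise (· ≠ ·) →
      x < q → y < q → w < q → q < z →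
      InRm G {x, y, z} → InRm G {w, q, z} → InRp G {x, y, w}
  | x6bp {x y q w z : Fin m} : [x, y, q, w, z].Pairwise (· ≠ ·) →
      x < q → y < q → w < q → q < z →
      InRp G {x, y, z} → InRp G {w, q, z} → InRp G {x, y, q}
  | x6bm {x y q w z : Fin m} : [x, y, q, w, z].Pairwise (· ≠ ·) →
      x < q → y < q → w < q → q < z →
      InRm G {x, y, z} → InRm G {w, q, z} → InRp G {x, y, q}

/-- Membership in the closure set `R⁻` of triples. -/
inductive InRm {m : ℕ} (G : SimpleGraph (Fin m)) : Finset (Fin m) → Prop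
  | x1 {x y z : Fin m} : [x, y, z].Pairwise (· ≠ ·) →
      x < z → y < z →
      InF G {x, z} → InF G {y, z} → InRm G {x, y, z}
  | x3 {x y w z : Fin m} : [x, y, w, z].Pairwise (· ≠ ·) →
      x < z → y < z → w < z → x < w → y < w →
      InF G {w, z} → InRp G {x, y, z} → InRm G {x, y, w}
  | x7a {x y q w z : Fin m} : [x, y, q, w, z].Pairwise (· ≠ ·) →
      x < q → y < q → w < q → q < z →
      InRp G {x, y, z} → InRm G {w, q, z} → InRm G {x, y, q}
  | x7a' {x y q w z : Fin m} : [x, y, q, w, z].Pairwise (· ≠ ·) →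
      x < q → y < q → w < q → q < z →
      InRm G {x, y, z} → InRp G {w, q, z} → InRm G {x, y, q}
  | x7b {x y q w z : Fin m} : [x, y, q, w, z].Pairwise (· ≠ ·) →
      x < q → y < q → w < q → q < z → x < w → y < w →
      InRp G {x, y, z} → InRm G {w, q, z} → InRm G {x, y, w}
  | x7b' {x y q w z : Fin m} : [x, y, q, w, z].Pairwise (· ≠ ·) →
      x < q → y < q → w < q → q < z → x < w → y < w →
      InRm G {x, y, z} → InRp G {w, q, z} → InRm G {x, y, w}
end


/-! ## Infrastructure: indexed walks -/

variable {m : ℕ}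

/-- Interior-list λ value: for a walk with interior list `L`,
`λ = (|L|+1) - 2 * Σ_{w ∈ L} (β w - 1)`. -/
def lamL (β : Fin m → ℕ) (L : List (Fin m)) : ℤ :=
  ((L.length : ℤ) + 1) - 2 * (L.map (fun x => (β x : ℤ) - 1)).sum

/-- `ILW G i x z L` : there is a walk from `x` to `z` with interior vertex list `L`,
all interiors `≥ i`, with the recursive splitting structure of looping walks. -/
inductive ILW (G : SimpleGraph (Fin m)) : ℕ → Fin m → Fin m → List (Fin m) → Prop
  | base {i : ℕ} {x y : Fin m} : G.Adj x y → ILW G i x y []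
  | comb {i : ℕ} {x y z : Fin m} {L₁ L₂ : List (Fin m)} :
      i ≤ (y : ℕ) → ILW G ((y:ℕ)+1) x y L₁ → ILW G ((y:ℕ)+1) y z L₂ →
      ILW G i x z (L₁ ++ y :: L₂)

theorem lamL_append (β : Fin m → ℕ) (y : Fin m) (L₁ L₂ : List (Fin m)) :
    lamL β (L₁ ++ y :: L₂) = lamL β L₁ + lamL β L₂ - 2 * ((β y : ℤ) - 1) := by
  simp [lamL, List.sum_append]
  ring

theorem lamL_reverse (β : Fin m → ℕ) (L : List (Fin m)) :
    lamL β L.reverse = lamL β L := by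
  simp [lamL, List.sum_reverse]

theorem lamL_parity (β : Fin m → ℕ) (L : List (Fin m)) :
    lamL β L % 2 = ((L.length : ℤ) + 1) % 2 := by
  simp [lamL, Int.sub_emod, Int.mul_emod_right]

theorem ILW.mono {G : SimpleGraph (Fin m)} {i j : ℕ} {x z : Fin m} {L : List (Fin m)}
    (h : ILW G j x z L) (hij : i ≤ j) : ILW G i x z L := by
  cases h with
  | base hadj => exact ILW.base hadj
  | comb hy h1 h2 => exact ILW.comb (le_trans hij hy) h1 h2

theorem ILW.reverse {G : SimpleGraph (Fin m)} {i : ℕ} {x z : Fin m} {L : List (Fin m)}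
    (h : ILW G i x z L) : ILW G i z x L.reverse := by
  induction h with
  | base hadj => exact ILW.base hadj.symm
  | comb hy h1 h2 ih1 ih2 =>
      have := ILW.comb hy ih2 ih1
      simpa using this

theorem ILW.mem_ge {G : SimpleGraph (Fin m)} {i : ℕ} {x z : Fin m} {L : List (Fin m)}
    (h : ILW G i x z L) : ∀ w ∈ L, i ≤ (w : ℕ) := by
  induction h with
  | base _ => intro w hw; simp at hw
  | comb hy h1 h2 ih1 ih2 =>
      intro w hw
      rcases List.mem_append.1 hw with hw | hw
      · exact le_trans (Nat.le_succ_of_le hy) (ih1 w hw)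
      · rcases List.mem_cons.1 hw with rfl | hw
        · exact hy
        · exact le_trans (Nat.le_succ_of_le hy) (ih2 w hw)

/-- Parity of a walk with respect to a proper 2-colouring. -/
theorem ILW.color {G : SimpleGraph (Fin m)} {cb : Fin m → Bool}
    (hcb : ∀ u v, G.Adj u v → cb u ≠ cb v) {i : ℕ} {x z : Fin m} {L : List (Fin m)}
    (h : ILW G i x z L) :
    ((if cb x then (1:ℤ) else 0) - (if cb z then (1:ℤ) else 0)) % 2
      = ((L.length : ℤ) + 1) % 2 := by
  induction h with
  | @base i' x' y' hadj =>
      have := hcb _ _ hadj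
      rcases Bool.eq_false_or_eq_true (cb x') with h1 | h1 <;>
        rcases Bool.eq_false_or_eq_true (cb y') with h2 | h2 <;>
          simp_all
  | comb hy h1 h2 ih1 ih2 =>
      simp only [List.length_append, List.length_cons]
      push_cast
      omega

/-! ## Generic game lemmas -/

section Game

variable {B : Type*} {β : Fin m → ℕ} {G : SimpleGraph (Fin m)} {E : B → B → Prop}
  {val : B → ℤ}

theorem satFrom_lt {i : ℕ} (h : i < m) (f : Fin m → B) :
    SatFrom β G E i f ↔ ∃ S : Finset B, S.card = β ⟨i, h⟩ ∧
      ∀ b ∈ S, SatFrom β G E (i + 1) (Function.update f ⟨i, h⟩ b) := by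
  rw [SatFrom, dif_pos h]

theorem satFrom_ge {i : ℕ} (h : ¬ i < m) (f : Fin m → B) :
    SatFrom β G E i f ↔ ∀ u v : Fin m, G.Adj u v → E (f u) (f v) := by
  rw [SatFrom, dif_neg h]

theorem advance (hβ1 : ∀ v, 1 ≤ β v) :
    ∀ j i : ℕ, ∀ f : Fin m → B, i ≤ j → SatFrom β G E i f →
    ∃ f', (∀ x : Fin m, (x : ℕ) < i → f' x = f x) ∧ SatFrom β G E j f' := by
  intro j
  induction j with
  | zero =>
      intro i f hij hs
      have : i = 0 := Nat.le_zero.1 hij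
      exact ⟨f, fun x _ => rfl, this ▸ hs⟩
  | succ j ih =>
      intro i f hij hs
      rcases Nat.lt_or_ge i (j+1) with hlt | hge
      · have hij' : i ≤ j := by omega
        obtain ⟨f₁, hag, hs₁⟩ := ih i f hij' hs
        by_cases hjm : j < m
        · rw [satFrom_lt hjm] at hs₁
          obtain ⟨S, hcard, hS⟩ := hs₁
          have hne : S.Nonempty := by
            rw [← Finset.card_pos, hcard]; exact hβ1 _
          obtain ⟨c, hc⟩ := hne
          refine ⟨Function.update f₁ ⟨j, hjm⟩ c, ?_, hS c hc⟩
          intro x hx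
          rw [Function.update_of_ne, hag x hx]
          intro hxe
          have : (x : ℕ) = j := by rw [hxe]
          omega
        · refine ⟨f₁, hag, ?_⟩
          rw [satFrom_ge (by omega)]
          rw [satFrom_ge hjm] at hs₁
          exact hs₁
      · have : i = j + 1 := by omega
        exact ⟨f, fun x _ => rfl, this ▸ hs⟩

theorem complete (hβ1 : ∀ v, 1 ≤ β v) {i : ℕ} {f : Fin m → B}
    (hs : SatFrom β G E i f) :
    ∃ h : Fin m → B, (∀ x : Fin m, (x : ℕ) < i → h x = f x) ∧
      ∀ u v : Fin m, G.Adj u v → E (h u) (h v) := by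
  obtain ⟨f', hag, hs'⟩ := advance hβ1 (max i m) i f (le_max_left _ _) hs
  refine ⟨f', hag, ?_⟩
  rw [satFrom_ge (by omega : ¬ max i m < m)] at hs'
  exact hs'

theorem ILW.parity_hom (hE : ∀ a b, E a b → |val a - val b| = 1)
    {i : ℕ} {x z : Fin m} {L : List (Fin m)} (hw : ILW G i x z L)
    {h : Fin m → B} (hh : ∀ u v : Fin m, G.Adj u v → E (h u) (h v)) :
    (val (h x) - val (h z)) % 2 = ((L.length : ℤ) + 1) % 2 := by
  induction hw with
  | base hadj =>
      have := hE _ _ (hh _ _ hadj)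
      rcases abs_eq (by norm_num : (0:ℤ) ≤ 1) |>.1 this with h1 | h1 <;> simp <;> omega
  | comb hy h1 h2 ih1 ih2 =>
      simp only [List.length_append, List.length_cons]
      push_cast
      omega

theorem walk_parity (hE : ∀ a b, E a b → |val a - val b| = 1)
    {a b : Fin m} (p : G.Walk a b) {h : Fin m → B}
    (hh : ∀ u v : Fin m, G.Adj u v → E (h u) (h v)) :
    (val (h a) - val (h b)) % 2 = (p.length : ℤ) % 2 := by
  induction p with
  | nil => simp
  | cons hadj p ih =>
      have := hE _ _ (hh _ _ hadj)
      rcases abs_eq (by norm_num : (0:ℤ) ≤ 1) |>.1 this with h1 | h1 <;>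
        · simp only [SimpleGraph.Walk.length_cons]
          push_cast
          omega

/-- Key necessity lemma: at a winning state, anchored walk constraints hold. -/
theorem lam_bound (hβ2 : ∀ v, β v = 1 ∨ β v = 2) (hβ1 : ∀ v, 1 ≤ β v)
    (hE : ∀ a b, E a b → |val a - val b| = 1) (hval : Function.Injective val) :
    ∀ {i : ℕ} {x z : Fin m} {L : List (Fin m)}, ILW G i x z L →
    ∀ f : Fin m → B, SatFrom β G E i f → (x : ℕ) < i → (z : ℕ) < i →
      val (f x) - val (f z) ≤ lamL β L := by
  intro i x z L hw
  induction hw with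
  | @base i' x' z' hadj =>
      intro f hs hx hz
      obtain ⟨h, hag, hh⟩ := complete hβ1 hs
      have := hE _ _ (hh _ _ hadj)
      have e1 : h x' = f x' := hag _ hx
      have e2 : h z' = f z' := hag _ hz
      rw [e1, e2] at this
      have : |val (f x') - val (f z')| = 1 := this
      simp only [lamL, List.length_nil, List.map_nil, List.sum_nil]
      have := abs_le.1 (le_of_eq this)
      omega
  | @comb i' x' y z' L₁ L₂ hy h1 h2 ih1 ih2 =>
      intro f hs hx hz
      obtain ⟨f₁, hag, hs₁⟩ := advance hβ1 (y : ℕ) i' f hy hs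
      have hym : (y:ℕ) < m := y.isLt
      rw [satFrom_lt hym] at hs₁
      obtain ⟨S, hcard, hS⟩ := hs₁
      have heta : (⟨(y:ℕ), hym⟩ : Fin m) = y := by ext; rfl
      rw [heta] at hcard hS
      have key : ∀ c ∈ S, val (f x') - val c ≤ lamL β L₁ ∧
          val c - val (f z') ≤ lamL β L₂ := by
        intro c hc
        have hsc := hS c hc
        have hx1 : ((x') : ℕ) < (y:ℕ) + 1 := by omega
        have hz1 : ((z') : ℕ) < (y:ℕ) + 1 := by omega
        have e1 : Function.update f₁ y c x' = f x' := by
          rw [Function.update_of_ne, hag _ hx]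
          intro he; have : ((x':Fin m) : ℕ) = (y:ℕ) := by rw [he]
          omega
        have e2 : Function.update f₁ y c z' = f z' := by
          rw [Function.update_of_ne, hag _ hz]
          intro he; have : ((z':Fin m) : ℕ) = (y:ℕ) := by rw [he]
          omega
        have e3 : Function.update f₁ y c y = c := Function.update_self _ _ _
        constructor
        · have := ih1 (Function.update f₁ y c) hsc hx1 (by omega)
          rwa [e1, e3] at this
        · have := ih2 (Function.update f₁ y c) hsc (by omega) hz1
          rwa [e3, e2] at this
      rw [lamL_append]
      rcases hβ2 y with hb | hb
      · obtain ⟨c, hcS⟩ := Finset.card_eq_one.1 (by rw [hcard, hb])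
        have hc : c ∈ S := by rw [hcS]; exact Finset.mem_singleton_self c
        obtain ⟨k1, k2⟩ := key c hc
        rw [hb]
        push_cast
        omega
      · have h1lt : 1 < S.card := by rw [hcard, hb]; norm_num
        obtain ⟨c₁, hc₁, c₂, hc₂, hne⟩ := Finset.one_lt_card.1 h1lt
        -- parity of the two branch values
        have par : (val c₁ - val c₂) % 2 = 0 := by
          obtain ⟨g₁, hag₁, hh₁⟩ := complete hβ1 (hS c₁ hc₁)
          obtain ⟨g₂, hag₂, hh₂⟩ := complete hβ1 (hS c₂ hc₂)
          have p₁ := ILW.parity_hom hE h1 hh₁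
          have p₂ := ILW.parity_hom hE h2 hh₂
          have p₁' := ILW.parity_hom hE h1 hh₂
          have e₁ : g₁ x' = f x' := by
            rw [hag₁ _ (by omega), Function.update_of_ne, hag _ hx]
            intro he; have : ((x':Fin m) : ℕ) = (y:ℕ) := by rw [he]
            omega
          have e₂ : g₂ x' = f x' := by
            rw [hag₂ _ (by omega), Function.update_of_ne, hag _ hx]
            intro he; have : ((x':Fin m) : ℕ) = (y:ℕ) := by rw [he]
            omega
          have ey₁ : g₁ y = c₁ := by
            rw [hag₁ _ (by omega), Function.update_self]
          have ey₂ : g₂ y = c₂ := by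
            rw [hag₂ _ (by omega), Function.update_self]
          rw [e₁, ey₁] at p₁
          rw [e₂, ey₂] at p₁'
          omega
        have hvne : val c₁ ≠ val c₂ := fun he => hne (hval he)
        obtain ⟨k11, k12⟩ := key c₁ hc₁
        obtain ⟨k21, k22⟩ := key c₂ hc₂
        rw [hb]
        push_cast
        rcases lt_or_gt_of_ne hvne with hlt | hgt
        · -- val c₁ < val c₂, so val c₂ ≥ val c₁ + 2
          omega
        · omega
end Game

section Push

variable {B : Type*} {β : Fin m → ℕ} {G : SimpleGraph (Fin m)} {E : B → B → Prop}
  {val : B → ℤ}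

/-- Adversary can push the value of a future variable `v` high, relative to anchor `a`. -/
theorem push_high (hβ2 : ∀ v, β v = 1 ∨ β v = 2) (hβ1 : ∀ v, 1 ≤ β v)
    (hE : ∀ a b, E a b → |val a - val b| = 1) (hval : Function.Injective val)
    {a v : Fin m} {L : List (Fin m)} (hw : ILW G ((v:ℕ)+1) a v L)
    {i : ℕ} {f : Fin m → B} (hs : SatFrom β G E i f)
    (ha : (a : ℕ) < i) (hv : i ≤ (v : ℕ)) :
    ∃ f', (∀ x : Fin m, (x : ℕ) < i → f' x = f x) ∧
      SatFrom β G E ((v:ℕ)+1) f' ∧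
      val (f a) - lamL β L + 2*((β v : ℤ) - 1) ≤ val (f' v) := by
  obtain ⟨f₁, hag, hs₁⟩ := advance hβ1 (v:ℕ) i f hv hs
  have hvm : (v:ℕ) < m := v.isLt
  rw [satFrom_lt hvm] at hs₁
  obtain ⟨S, hcard, hS⟩ := hs₁
  have heta : (⟨(v:ℕ), hvm⟩ : Fin m) = v := by ext; rfl
  rw [heta] at hcard hS
  have key : ∀ c ∈ S, val (f a) - val c ≤ lamL β L := by
    intro c hc
    have := lam_bound hβ2 hβ1 hE hval hw (Function.update f₁ v c) (hS c hc)
      (by omega) (by omega)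
    have e1 : Function.update f₁ v c a = f a := by
      rw [Function.update_of_ne, hag _ ha]
      intro he; have : ((a:Fin m):ℕ) = (v:ℕ) := by rw [he]
      omega
    have e2 : Function.update f₁ v c v = c := Function.update_self _ _ _
    rwa [e1, e2] at this
  rcases hβ2 v with hb | hb
  · obtain ⟨c, hcS⟩ := Finset.card_eq_one.1 (by rw [hcard, hb])
    have hc : c ∈ S := by rw [hcS]; exact Finset.mem_singleton_self c
    refine ⟨Function.update f₁ v c, ?_, hS c hc, ?_⟩
    · intro x hx
      rw [Function.update_of_ne, hag _ hx]
      intro he; have : ((x:Fin m):ℕ) = (v:ℕ) := by rw [he]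
      omega
    · have := key c hc
      rw [Function.update_self, hb]
      push_cast
      omega
  · have h1lt : 1 < S.card := by rw [hcard, hb]; norm_num
    obtain ⟨c₁, hc₁, c₂, hc₂, hne⟩ := Finset.one_lt_card.1 h1lt
    have par : (val c₁ - val c₂) % 2 = 0 := by
      obtain ⟨g₁, hag₁, hh₁⟩ := complete hβ1 (hS c₁ hc₁)
      obtain ⟨g₂, hag₂, hh₂⟩ := complete hβ1 (hS c₂ hc₂)
      have p₁ := ILW.parity_hom hE hw hh₁
      have p₂ := ILW.parity_hom hE hw hh₂
      have e₁ : g₁ a = f a := by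
        rw [hag₁ _ (by omega), Function.update_of_ne, hag _ ha]
        intro he; have : ((a:Fin m):ℕ) = (v:ℕ) := by rw [he]
        omega
      have e₂ : g₂ a = f a := by
        rw [hag₂ _ (by omega), Function.update_of_ne, hag _ ha]
        intro he; have : ((a:Fin m):ℕ) = (v:ℕ) := by rw [he]
        omega
      have ev₁ : g₁ v = c₁ := by rw [hag₁ _ (by omega), Function.update_self]
      have ev₂ : g₂ v = c₂ := by rw [hag₂ _ (by omega), Function.update_self]
      rw [e₁, ev₁] at p₁
      rw [e₂, ev₂] at p₂
      omega
    have hvne : val c₁ ≠ val c₂ := fun he => hne (hval he)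
    have k₁ := key c₁ hc₁
    have k₂ := key c₂ hc₂
    -- pick the branch with the larger value
    rcases lt_or_gt_of_ne hvne with hlt | hgt
    · refine ⟨Function.update f₁ v c₂, ?_, hS c₂ hc₂, ?_⟩
      · intro x hx
        rw [Function.update_of_ne, hag _ hx]
        intro he; have : ((x:Fin m):ℕ) = (v:ℕ) := by rw [he]
        omega
      · rw [Function.update_self, hb]; push_cast; omega
    · refine ⟨Function.update f₁ v c₁, ?_, hS c₁ hc₁, ?_⟩
      · intro x hx
        rw [Function.update_of_ne, hag _ hx]
        intro he; have : ((x:Fin m):ℕ) = (v:ℕ) := by rw [he]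
        omega
      · rw [Function.update_self, hb]; push_cast; omega

/-- Adversary can push the value of a future variable `v` low, relative to anchor `a`. -/
theorem push_low (hβ2 : ∀ v, β v = 1 ∨ β v = 2) (hβ1 : ∀ v, 1 ≤ β v)
    (hE : ∀ a b, E a b → |val a - val b| = 1) (hval : Function.Injective val)
    {a v : Fin m} {L : List (Fin m)} (hw : ILW G ((v:ℕ)+1) a v L)
    {i : ℕ} {f : Fin m → B} (hs : SatFrom β G E i f)
    (ha : (a : ℕ) < i) (hv : i ≤ (v : ℕ)) :
    ∃ f', (∀ x : Fin m, (x : ℕ) < i → f' x = f x) ∧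
      SatFrom β G E ((v:ℕ)+1) f' ∧
      val (f' v) ≤ val (f a) + lamL β L - 2*((β v : ℤ) - 1) := by
  obtain ⟨f₁, hag, hs₁⟩ := advance hβ1 (v:ℕ) i f hv hs
  have hvm : (v:ℕ) < m := v.isLt
  rw [satFrom_lt hvm] at hs₁
  obtain ⟨S, hcard, hS⟩ := hs₁
  have heta : (⟨(v:ℕ), hvm⟩ : Fin m) = v := by ext; rfl
  rw [heta] at hcard hS
  have key : ∀ c ∈ S, val c - val (f a) ≤ lamL β L := by
    intro c hc
    have := lam_bound hβ2 hβ1 hE hval (ILW.reverse hw) (Function.update f₁ v c)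
      (hS c hc) (by omega) (by omega)
    rw [lamL_reverse] at this
    have e1 : Function.update f₁ v c a = f a := by
      rw [Function.update_of_ne, hag _ ha]
      intro he; have : ((a:Fin m):ℕ) = (v:ℕ) := by rw [he]
      omega
    have e2 : Function.update f₁ v c v = c := Function.update_self _ _ _
    rwa [e2, e1] at this
  rcases hβ2 v with hb | hb
  · obtain ⟨c, hcS⟩ := Finset.card_eq_one.1 (by rw [hcard, hb])
    have hc : c ∈ S := by rw [hcS]; exact Finset.mem_singleton_self c
    refine ⟨Function.update f₁ v c, ?_, hS c hc, ?_⟩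
    · intro x hx
      rw [Function.update_of_ne, hag _ hx]
      intro he; have : ((x:Fin m):ℕ) = (v:ℕ) := by rw [he]
      omega
    · have := key c hc
      rw [Function.update_self, hb]
      push_cast
      omega
  · have h1lt : 1 < S.card := by rw [hcard, hb]; norm_num
    obtain ⟨c₁, hc₁, c₂, hc₂, hne⟩ := Finset.one_lt_card.1 h1lt
    have par : (val c₁ - val c₂) % 2 = 0 := by
      obtain ⟨g₁, hag₁, hh₁⟩ := complete hβ1 (hS c₁ hc₁)
      obtain ⟨g₂, hag₂, hh₂⟩ := complete hβ1 (hS c₂ hc₂)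
      have p₁ := ILW.parity_hom hE hw hh₁
      have p₂ := ILW.parity_hom hE hw hh₂
      have e₁ : g₁ a = f a := by
        rw [hag₁ _ (by omega), Function.update_of_ne, hag _ ha]
        intro he; have : ((a:Fin m):ℕ) = (v:ℕ) := by rw [he]
        omega
      have e₂ : g₂ a = f a := by
        rw [hag₂ _ (by omega), Function.update_of_ne, hag _ ha]
        intro he; have : ((a:Fin m):ℕ) = (v:ℕ) := by rw [he]
        omega
      have ev₁ : g₁ v = c₁ := by rw [hag₁ _ (by omega), Function.update_self]
      have ev₂ : g₂ v = c₂ := by rw [hag₂ _ (by omega), Function.update_self]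
      rw [e₁, ev₁] at p₁
      rw [e₂, ev₂] at p₂
      omega
    have hvne : val c₁ ≠ val c₂ := fun he => hne (hval he)
    have k₁ := key c₁ hc₁
    have k₂ := key c₂ hc₂
    rcases lt_or_gt_of_ne hvne with hlt | hgt
    · refine ⟨Function.update f₁ v c₁, ?_, hS c₁ hc₁, ?_⟩
      · intro x hx
        rw [Function.update_of_ne, hag _ hx]
        intro he; have : ((x:Fin m):ℕ) = (v:ℕ) := by rw [he]
        omega
      · rw [Function.update_self, hb]; push_cast; omega
    · refine ⟨Function.update f₁ v c₂, ?_, hS c₂ hc₂, ?_⟩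
      · intro x hx
        rw [Function.update_of_ne, hag _ hx]
        intro he; have : ((x:Fin m):ℕ) = (v:ℕ) := by rw [he]
        omega
      · rw [Function.update_self, hb]; push_cast; omega

end Push

/-! ## Conversions between looping walks and `ILW` -/

section Conv

variable {G : SimpleGraph (Fin m)} {β : Fin m → ℕ}

theorem lamWalk_lamL (β : Fin m → ℕ) (x z : Fin m) (L : List (Fin m)) :
    lamWalk β (x :: (L ++ [z])) = lamL β L := by
  have h1 : (x :: (L ++ [z])).drop 1 = L ++ [z] := rfl
  have h2 : (L ++ [z]).dropLast = L := by
    simp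
  simp [lamWalk, lamL, h1, h2]

theorem getLast?_cons_append (x z : Fin m) (L : List (Fin m)) :
    (x :: (L ++ [z])).getLast? = some z := by
  rw [show x :: (L ++ [z]) = (x :: L) ++ [z] by simp]
  exact List.getLast?_concat

theorem looping_ilw {Q : List (Fin m)} (h : IsLoopingWalk G Q) :
    ∃ (x z : Fin m) (L : List (Fin m)), Q = x :: (L ++ [z]) ∧
      ILW G (max (x:ℕ) (z:ℕ) + 1) x z L := by
  induction h with
  | @base x y hadj =>
      exact ⟨x, y, [], by simp, ILW.base hadj⟩
  | @comb x y z Q₁ Q₂ h1 h2 hxz hint ih1 ih2 =>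
      obtain ⟨x₁, z₁, L₁, he₁, hw₁⟩ := ih1
      obtain ⟨x₂, z₂, L₂, he₂, hw₂⟩ := ih2
      have hx₁ : x₁ = x := by
        have := congrArg List.head? he₁; simpa using this.symm
      have hx₂ : x₂ = y := by
        have := congrArg List.head? he₂; simpa using this.symm
      have hL₁ : L₁ = Q₁ ∧ z₁ = y := by
        have : Q₁ ++ [y] = L₁ ++ [z₁] := by
          have := congrArg List.tail he₁; simpa using this
        obtain ⟨ha, hb⟩ := List.append_inj' this (by simp)
        exact ⟨ha.symm, by simpa using hb.symm⟩
      have hL₂ : L₂ = Q₂ ∧ z₂ = z := by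
        have : Q₂ ++ [z] = L₂ ++ [z₂] := by
          have := congrArg List.tail he₂; simpa using this
        obtain ⟨ha, hb⟩ := List.append_inj' this (by simp)
        exact ⟨ha.symm, by simpa using hb.symm⟩
      have hxy : (x:ℕ) < (y:ℕ) ∧ (z:ℕ) < (y:ℕ) := by
        have := hint y (by simp)
        exact ⟨Fin.lt_def.1 this.1, Fin.lt_def.1 this.2⟩
      rw [hx₁, hL₁.1, hL₁.2] at hw₁
      rw [hx₂, hL₂.1, hL₂.2] at hw₂
      have hw₁' : ILW G ((y:ℕ)+1) x y Q₁ := by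
        have he : max (x:ℕ) (y:ℕ) = (y:ℕ) := by omega
        rwa [he] at hw₁
      have hw₂' : ILW G ((y:ℕ)+1) y z Q₂ := by
        have he : max (y:ℕ) (z:ℕ) = (y:ℕ) := by omega
        rwa [he] at hw₂
      refine ⟨x, z, Q₁ ++ y :: Q₂, ?_, ?_⟩
      · simp
      · exact ILW.comb (by omega) hw₁' hw₂'

theorem ilw_looping : ∀ {i : ℕ} {x z : Fin m} {L : List (Fin m)},
    ILW G i x z L → (x:ℕ) < i → (z:ℕ) < i → x ≠ z →
    IsLoopingWalk G (x :: (L ++ [z])) := by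
  intro i x z L h
  induction h with
  | @base i' x' z' hadj =>
      intro _ _ _
      exact IsLoopingWalk.base hadj
  | @comb i' x' y z' L₁ L₂ hy h1 h2 ih1 ih2 =>
      intro hx hz hne
      have hxy : x' ≠ y := by
        intro he; rw [he] at hx; omega
      have hzy : z' ≠ y := by
        intro he; rw [he] at hz; omega
      have l1 := ih1 (by omega) (by omega) hxy
      have l2 := ih2 (by omega) (by omega) (Ne.symm hzy)
      have hint : ∀ w ∈ L₁ ++ y :: L₂, x' < w ∧ z' < w := by
        intro w hw
        have hwge : i' ≤ (w:ℕ) := by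
          rcases List.mem_append.1 hw with hw | hw
          · have := h1.mem_ge w hw; omega
          · rcases List.mem_cons.1 hw with rfl | hw
            · exact hy
            · have := h2.mem_ge w hw; omega
        constructor
        · exact Fin.lt_def.2 (by omega)
        · exact Fin.lt_def.2 (by omega)
      have := IsLoopingWalk.comb l1 l2 hne hint
      simpa [List.append_assoc] using this

theorem between_ilw {u v : Fin m} (huv : (u:ℕ) < (v:ℕ)) {Q : List (Fin m)}
    (h : LoopingWalkBetween G u v Q) :
    ∃ L, ILW G ((v:ℕ)+1) u v L ∧ lamL β L = lamWalk β Q := by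
  obtain ⟨hloop, hor⟩ := h
  obtain ⟨x, z, L, rfl, hw⟩ := looping_ilw hloop
  have hhead : (x :: (L ++ [z])).head? = some x := rfl
  have hlast : (x :: (L ++ [z])).getLast? = some z := getLast?_cons_append x z L
  rcases hor with ⟨h1, h2⟩ | ⟨h1, h2⟩
  · rw [hhead] at h1; rw [hlast] at h2
    have e1 : x = u := by injection h1
    have e2 : z = v := by injection h2
    rw [e1, e2] at hw ⊢
    have e3 : max (u:ℕ) (v:ℕ) = (v:ℕ) := by omega
    rw [e3] at hw
    exact ⟨L, hw, (lamWalk_lamL β u v L).symm⟩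
  · rw [hhead] at h1; rw [hlast] at h2
    have e1 : x = v := by injection h1
    have e2 : z = u := by injection h2
    rw [e1, e2] at hw ⊢
    have e3 : max (v:ℕ) (u:ℕ) = (v:ℕ) := by omega
    rw [e3] at hw
    refine ⟨L.reverse, hw.reverse, ?_⟩
    rw [lamL_reverse, lamWalk_lamL β v u L]

theorem ilw_between {u v : Fin m} {i : ℕ} (hu : (u:ℕ) < i) (hv : (v:ℕ) < i)
    (hne : u ≠ v) {L : List (Fin m)} (h : ILW G i u v L) :
    LoopingWalkBetween G u v (u :: (L ++ [v])) ∧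
      lamWalk β (u :: (L ++ [v])) = lamL β L := by
  exact ⟨⟨ilw_looping h hu hv hne, Or.inl ⟨rfl, getLast?_cons_append u v L⟩⟩,
    lamWalk_lamL β u v L⟩

end Conv

/-! ## δ and γ facts (using `P_∞ ⊨ Ψ`) -/

section Delta

variable {G : SimpleGraph (Fin m)} {β : Fin m → ℕ} {g : Fin m → ℤ}

theorem hEZ : ∀ a b : ℤ, intPathAdj a b → |(id a : ℤ) - id b| = 1 := by
  intro a b h; exact h

theorem closed_nonneg (hβ2 : ∀ v, β v = 1 ∨ β v = 2) (hβ1 : ∀ v, 1 ≤ β v)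
    (hinf : Sat β G intPathAdj) {i : ℕ} {x : Fin m} {L : List (Fin m)}
    (h : ILW G i x x L) (hx : (x:ℕ) < i) : 0 ≤ lamL β L := by
  have hs := hinf (fun _ => 0)
  obtain ⟨f₁, _, hs₁⟩ := advance hβ1 i 0 _ (Nat.zero_le _) hs
  have := lam_bound (val := id) hβ2 hβ1 hEZ (fun _ _ h => h) h f₁ hs₁ hx hx
  simpa using this

theorem delta_exists (hβ2 : ∀ v, β v = 1 ∨ β v = 2) (hβ1 : ∀ v, 1 ≤ β v)
    (hinf : Sat β G intPathAdj) {u v : Fin m} (huv : (u:ℕ) < (v:ℕ))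
    {L₀ : List (Fin m)} (h0 : ILW G ((v:ℕ)+1) u v L₀) :
    ∃ d, IsDelta G β u v d ∧ d ≤ lamL β L₀ := by
  classical
  set P : ℤ → Prop := fun r => ∃ Q, LoopingWalkBetween G u v Q ∧ lamWalk β Q = r with hP
  have hne : u ≠ v := by
    intro he; rw [he] at huv; omega
  obtain ⟨hbet, hlam⟩ := ilw_between (β := β) (by omega) (by omega) hne h0
  have hinh : P (lamL β L₀) := ⟨_, hbet, hlam⟩
  have hbdd : ∃ b : ℤ, ∀ z : ℤ, P z → b ≤ z := by
    have hs := hinf (fun _ => 0)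
    obtain ⟨f₁, _, hs₁⟩ := advance hβ1 ((v:ℕ)+1) 0 _ (Nat.zero_le _) hs
    refine ⟨f₁ u - f₁ v, ?_⟩
    rintro r ⟨Q, hQ, rfl⟩
    obtain ⟨L, hL, hlamL⟩ := between_ilw (β := β) huv hQ
    have := lam_bound (val := id) hβ2 hβ1 hEZ (fun _ _ h => h) hL f₁ hs₁
      (by omega) (by omega)
    simp only [id] at this
    omega
  obtain ⟨lb, hlb, hmin⟩ := Int.exists_least_of_bdd hbdd ⟨_, hinh⟩
  refine ⟨lb, ⟨hlb, ?_⟩, hmin _ hinh⟩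
  intro Q hQ
  exact hmin _ ⟨Q, hQ, rfl⟩

theorem g_nonneg (hβ1 : ∀ v, 1 ≤ β v) (hg : IsGamma G β g) (v : Fin m) : 0 ≤ g v := by
  have := hg v
  by_cases h0 : (v:ℕ) = 0
  · rw [if_pos h0] at this; omega
  · rw [if_neg h0] at this
    obtain ⟨t, ⟨ht0, _, _⟩, he⟩ := this
    have := hβ1 v
    omega

theorem g_ge_beta (hg : IsGamma G β g) {v : Fin m} (h0 : (v:ℕ) ≠ 0) :
    (β v : ℤ) - 1 ≤ g v := by
  have := hg v
  rw [if_neg h0] at this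
  obtain ⟨t, ⟨ht0, _, _⟩, he⟩ := this
  omega

theorem gamma_step (hβ2 : ∀ v, β v = 1 ∨ β v = 2) (hβ1 : ∀ v, 1 ≤ β v)
    (hinf : Sat β G intPathAdj) (hg : IsGamma G β g)
    {u v : Fin m} (huv : (u:ℕ) < (v:ℕ)) {L : List (Fin m)}
    (h : ILW G ((v:ℕ)+1) u v L) :
    g u + 2*((β v : ℤ) - 1) - lamL β L ≤ g v := by
  obtain ⟨d, hd, hdle⟩ := delta_exists hβ2 hβ1 hinf huv h
  have hv0 : (v:ℕ) ≠ 0 := by omega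
  have := hg v
  rw [if_neg hv0] at this
  obtain ⟨t, ⟨ht0, hub, _⟩, he⟩ := this
  have := hub u (Fin.lt_def.2 huv) d hd
  omega

/-- Demand chains, flowing future spread requirements back to an assigned anchor. -/
inductive Dem (G : SimpleGraph (Fin m)) (β : Fin m → ℕ) : ℕ → Fin m → ℤ → Prop
  | nil {i : ℕ} {u : Fin m} : Dem G β i u 0
  | cons {i : ℕ} {u v : Fin m} {L : List (Fin m)} {D : ℤ} :
      i ≤ (v:ℕ) → (u:ℕ) < (v:ℕ) → ILW G ((v:ℕ)+1) u v L →
      Dem G β ((v:ℕ)+1) v D →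
      Dem G β i u (D + 2*((β v : ℤ) - 1) - lamL β L)

theorem Dem.mono {i j : ℕ} {u : Fin m} {D : ℤ} (h : Dem G β j u D) (hij : i ≤ j) :
    Dem G β i u D := by
  cases h with
  | nil => exact Dem.nil
  | cons hv huv hw hd => exact Dem.cons (le_trans hij hv) huv hw hd

theorem dem_le (hβ2 : ∀ v, β v = 1 ∨ β v = 2) (hβ1 : ∀ v, 1 ≤ β v)
    (hinf : Sat β G intPathAdj) (hg : IsGamma G β g)
    {i : ℕ} {u : Fin m} {D : ℤ} (h : Dem G β i u D) :
    ∃ w : Fin m, D ≤ g w - g u := by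
  induction h with
  | @nil i0 u0 => exact ⟨u0, by omega⟩
  | @cons i' u' v' L D hv huv hw hd ih =>
      obtain ⟨w, hwle⟩ := ih
      have := gamma_step hβ2 hβ1 hinf hg huv hw
      exact ⟨w, by omega⟩

end Delta

/-! ## The forward direction: forced spread -/

section Fwd

variable {G : SimpleGraph (Fin m)} {β : Fin m → ℕ} {g : Fin m → ℤ}
variable {B : Type*} {E : B → B → Prop} {val : B → ℤ}

theorem spread [Nonempty B] (hβ2 : ∀ v, β v = 1 ∨ β v = 2) (hβ1 : ∀ v, 1 ≤ β v)
    (hE : ∀ a b, E a b → |val a - val b| = 1) (hval : Function.Injective val)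
    (hconn : G.Connected) (hg : IsGamma G β g) (hsat : Sat β G E) :
    ∀ N : ℕ, ∀ v : Fin m, (v:ℕ) ≤ N →
    ∃ f₁ f₂ : Fin m → B, SatFrom β G E ((v:ℕ)+1) f₁ ∧ SatFrom β G E ((v:ℕ)+1) f₂ ∧
      2 * g v ≤ val (f₁ v) - val (f₂ v) := by
  have trivcase : ∀ v : Fin m, g v ≤ 0 →
      ∃ f₁ f₂ : Fin m → B, SatFrom β G E ((v:ℕ)+1) f₁ ∧ SatFrom β G E ((v:ℕ)+1) f₂ ∧
      2 * g v ≤ val (f₁ v) - val (f₂ v) := by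
    intro v hv0
    have hs := hsat (Classical.arbitrary _)
    obtain ⟨f', _, hs'⟩ := advance hβ1 ((v:ℕ)+1) 0 _ (Nat.zero_le _) hs
    exact ⟨f', f', hs', hs', by omega⟩
  have doubling : ∀ v : Fin m, (v:ℕ) ≠ 0 → β v = 2 →
      ∃ f₁ f₂ : Fin m → B, SatFrom β G E ((v:ℕ)+1) f₁ ∧ SatFrom β G E ((v:ℕ)+1) f₂ ∧
      2 ≤ val (f₁ v) - val (f₂ v) := by
    intro v hv0 hb
    have hs := hsat (Classical.arbitrary _)
    obtain ⟨f₁, _, hs₁⟩ := advance hβ1 (v:ℕ) 0 _ (Nat.zero_le _) hs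
    have hvm : (v:ℕ) < m := v.isLt
    rw [satFrom_lt hvm] at hs₁
    obtain ⟨S, hcard, hS⟩ := hs₁
    have heta : (⟨(v:ℕ), hvm⟩ : Fin m) = v := by ext; rfl
    rw [heta] at hcard hS
    have h1lt : 1 < S.card := by rw [hcard, hb]; norm_num
    obtain ⟨c₁, hc₁, c₂, hc₂, hne⟩ := Finset.one_lt_card.1 h1lt
    -- parity via connectivity to variable `0`
    have hm0 : 0 < m := by omega
    set v0 : Fin m := ⟨0, hm0⟩ with hv0def
    have hv0ne : v0 ≠ v := by
      intro he
      have : (v0:ℕ) = (v:ℕ) := by rw [he]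
      simp [hv0def] at this
      omega
    have par : (val c₁ - val c₂) % 2 = 0 := by
      obtain ⟨g₁, hag₁, hh₁⟩ := complete hβ1 (hS c₁ hc₁)
      obtain ⟨g₂, hag₂, hh₂⟩ := complete hβ1 (hS c₂ hc₂)
      obtain ⟨p⟩ := hconn.preconnected v v0
      have p₁ := walk_parity hE p hh₁
      have p₂ := walk_parity hE p hh₂
      have e₁ : g₁ v0 = f₁ v0 := by
        rw [hag₁ _ (by simp [hv0def]), Function.update_of_ne hv0ne]
      have e₂ : g₂ v0 = f₁ v0 := by
        rw [hag₂ _ (by simp [hv0def]), Function.update_of_ne hv0ne]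
      have ev₁ : g₁ v = c₁ := by rw [hag₁ _ (by omega), Function.update_self]
      have ev₂ : g₂ v = c₂ := by rw [hag₂ _ (by omega), Function.update_self]
      rw [e₁, ev₁] at p₁
      rw [e₂, ev₂] at p₂
      omega
    have hvne : val c₁ ≠ val c₂ := fun he => hne (hval he)
    rcases lt_or_gt_of_ne hvne with hlt | hgt
    · exact ⟨Function.update f₁ v c₂, Function.update f₁ v c₁, hS c₂ hc₂, hS c₁ hc₁,
        by rw [Function.update_self, Function.update_self]; omega⟩
    · exact ⟨Function.update f₁ v c₁, Function.update f₁ v c₂, hS c₁ hc₁, hS c₂ hc₂,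
        by rw [Function.update_self, Function.update_self]; omega⟩
  intro N
  induction N with
  | zero =>
      intro v hvN
      have h0 : (v:ℕ) = 0 := by omega
      have := hg v
      rw [if_pos h0] at this
      exact trivcase v (by omega)
  | succ N ih =>
      intro v hvN
      have hgv := hg v
      by_cases h0 : (v:ℕ) = 0
      · rw [if_pos h0] at hgv
        exact trivcase v (by omega)
      · rw [if_neg h0] at hgv
        obtain ⟨t, ⟨ht0, hub, hcase⟩, he⟩ := hgv
        rcases hcase with ht | ⟨u, hult, d, hdelta, hteq⟩
        · rcases hβ2 v with hb | hb
          · exact trivcase v (by omega)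
          · obtain ⟨f₁, f₂, hs₁, hs₂, hd⟩ := doubling v h0 hb
            refine ⟨f₁, f₂, hs₁, hs₂, ?_⟩
            have : g v = 1 := by omega
            omega
        · -- the maximum is attained at u via δ(u,v) = d
          obtain ⟨Q, hQ, hQlam⟩ := hdelta.1
          have hultn : (u:ℕ) < (v:ℕ) := Fin.lt_def.1 hult
          obtain ⟨L, hL, hlamL⟩ := between_ilw (β := β) hultn hQ
          obtain ⟨f₁, f₂, hs₁, hs₂, hdiff⟩ := ih u (by omega)
          obtain ⟨f₁', hag₁, hs₁', hpush₁⟩ :=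
            push_high hβ2 hβ1 hE hval hL hs₁ (by omega) (by omega)
          obtain ⟨f₂', hag₂, hs₂', hpush₂⟩ :=
            push_low hβ2 hβ1 hE hval hL hs₂ (by omega) (by omega)
          refine ⟨f₁', f₂', hs₁', hs₂', ?_⟩
          have hd' : lamL β L = d := by rw [hlamL, hQlam]
          rw [hd'] at hpush₁ hpush₂
          omega

theorem forward_dir {n : ℕ} (hn : 4 ≤ n)
    (hβ2 : ∀ v, β v = 1 ∨ β v = 2) (hβ1 : ∀ v, 1 ≤ β v)
    (hconn : G.Connected) (hg : IsGamma G β g)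
    (hsat : Sat β G (pathAdj n)) : ¬ ∃ v : Fin m, (n : ℤ) ≤ 2 * g v := by
  rintro ⟨v, hv⟩
  have hn0 : 0 < n := by omega
  haveI : Nonempty (Fin n) := ⟨⟨0, hn0⟩⟩
  have hE : ∀ a b : Fin n, pathAdj n a b → |((a:ℤ)) - (b:ℤ)| = 1 := by
    intro a b h
    rcases h with h | h
    · have h' : (a:ℤ) + 1 = (b:ℤ) := by exact_mod_cast congrArg (Nat.cast : ℕ → ℤ) h
      have hd : (a:ℤ) - (b:ℤ) = -1 := by omega
      rw [hd]; norm_num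
    · have h' : (b:ℤ) + 1 = (a:ℤ) := by exact_mod_cast congrArg (Nat.cast : ℕ → ℤ) h
      have hd : (a:ℤ) - (b:ℤ) = 1 := by omega
      rw [hd]; norm_num
  have hval : Function.Injective (fun b : Fin n => (b:ℤ)) := by
    intro a b h
    simp only at h
    exact Fin.ext (by exact_mod_cast h)
  obtain ⟨f₁, f₂, _, _, hdiff⟩ :=
    spread hβ2 hβ1 hE hval hconn hg hsat (v:ℕ) v le_rfl
  have h₁ : ((f₁ v : Fin n) : ℤ) ≤ (n:ℤ) - 1 := by
    have := (f₁ v).isLt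
    omega
  have h₂ : (0:ℤ) ≤ ((f₂ v : Fin n) : ℤ) := by positivity
  omega

end Fwd

/-! ## The backward direction: strategy construction -/

section Back

variable {G : SimpleGraph (Fin m)} {β : Fin m → ℕ} {g : Fin m → ℤ} {n : ℕ}

/-- Value of a path vertex as an integer. -/
def valF {n : ℕ} (b : Fin n) : ℤ := ((b : ℕ) : ℤ)

/-- The invariant maintained by the strategy on `P_n`. -/
def INV (n : ℕ) (G : SimpleGraph (Fin m)) (β : Fin m → ℕ)
    (f : Fin m → Fin n) (i : ℕ) : Prop :=
  (∀ (x z : Fin m) (L : List (Fin m)), (x:ℕ) < i → (z:ℕ) < i → ILW G i x z L →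
      valF (f x) - valF (f z) ≤ lamL β L) ∧
  (∀ (x z : Fin m) (L : List (Fin m)), (x:ℕ) < i → (z:ℕ) < i → ILW G i x z L →
      (valF (f x) - valF (f z)) % 2 = ((L.length : ℤ) + 1) % 2) ∧
  (∀ (u : Fin m) (D : ℤ), (u:ℕ) < i → Dem G β i u D →
      D ≤ valF (f u) ∧ valF (f u) ≤ (n : ℤ) - 1 - D)

theorem inv_update (hβ2 : ∀ v, β v = 1 ∨ β v = 2) (hβ1 : ∀ v, 1 ≤ β v)
    (hinf : Sat β G intPathAdj) (hbip : Bipartite G)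
    {i : ℕ} (him : i < m) {f : Fin m → Fin n} (hI : INV n G β f i) (b : Fin n)
    (hlo : ∀ (u : Fin m) (L : List (Fin m)), (u:ℕ) < i → ILW G (i+1) u ⟨i, him⟩ L →
      valF (f u) - lamL β L ≤ valF b)
    (hup : ∀ (u : Fin m) (L : List (Fin m)), (u:ℕ) < i → ILW G (i+1) u ⟨i, him⟩ L →
      valF b ≤ valF (f u) + lamL β L)
    (hpar : ∀ (u : Fin m) (L : List (Fin m)), (u:ℕ) < i → ILW G (i+1) u ⟨i, him⟩ L →
      (valF b - valF (f u)) % 2 = ((L.length : ℤ) + 1) % 2)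
    (hwall : ∀ D : ℤ, Dem G β (i+1) ⟨i, him⟩ D →
      D ≤ valF b ∧ valF b ≤ (n : ℤ) - 1 - D) :
    INV n G β (Function.update f ⟨i, him⟩ b) (i+1) := by
  obtain ⟨h1, h2, h3⟩ := hI
  set vi : Fin m := ⟨i, him⟩ with hvi
  have hviv : (vi : ℕ) = i := rfl
  have hne : ∀ x : Fin m, (x:ℕ) < i → x ≠ vi := by
    intro x hx he
    have : (x:ℕ) = i := by rw [he]
    omega
  have hupd_old : ∀ x : Fin m, (x:ℕ) < i → Function.update f vi b x = f x := by
    intro x hx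
    exact Function.update_of_ne (hne x hx) _ _
  have hupd_new : Function.update f vi b vi = b := Function.update_self _ _ _
  refine ⟨?_, ?_, ?_⟩
  · -- bound component
    intro x z L hx hz hw
    by_cases hxi : (x:ℕ) < i
    · by_cases hzi : (z:ℕ) < i
      · rw [hupd_old x hxi, hupd_old z hzi]
        exact h1 x z L hxi hzi (hw.mono (Nat.le_succ i))
      · have hzvi : z = vi := Fin.ext (by omega)
        subst hzvi
        rw [hupd_old x hxi, hupd_new]
        have := hlo x L hxi hw
        omega
    · have hxvi : x = vi := Fin.ext (by omega)
      subst hxvi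
      rw [hupd_new]
      by_cases hzi : (z:ℕ) < i
      · rw [hupd_old z hzi]
        have := hup z L.reverse hzi hw.reverse
        rw [lamL_reverse] at this
        omega
      · have hzvi : z = vi := Fin.ext (by omega)
        subst hzvi
        rw [hupd_new]
        have := closed_nonneg hβ2 hβ1 hinf hw (by omega)
        omega
  · -- parity component
    intro x z L hx hz hw
    by_cases hxi : (x:ℕ) < i
    · by_cases hzi : (z:ℕ) < i
      · rw [hupd_old x hxi, hupd_old z hzi]
        exact h2 x z L hxi hzi (hw.mono (Nat.le_succ i))
      · have hzvi : z = vi := Fin.ext (by omega)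
        subst hzvi
        rw [hupd_old x hxi, hupd_new]
        have := hpar x L hxi hw
        omega
    · have hxvi : x = vi := Fin.ext (by omega)
      subst hxvi
      rw [hupd_new]
      by_cases hzi : (z:ℕ) < i
      · rw [hupd_old z hzi]
        have := hpar z L.reverse hzi hw.reverse
        rw [List.length_reverse] at this
        omega
      · have hzvi : z = vi := Fin.ext (by omega)
        subst hzvi
        rw [hupd_new]
        obtain ⟨cb, hcb⟩ := hbip
        have := ILW.color hcb hw
        omega
  · -- wall component
    intro u D hu hDem
    by_cases hui : (u:ℕ) < i
    · rw [hupd_old u hui]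
      exact h3 u D hui (hDem.mono (Nat.le_succ i))
    · have huvi : u = vi := Fin.ext (by omega)
      subst huvi
      rw [hupd_new]
      exact hwall D hDem

end Back

section Back2

variable {G : SimpleGraph (Fin m)} {β : Fin m → ℕ} {g : Fin m → ℤ} {n : ℕ}

theorem back_hom {i : ℕ} (hge : ¬ i < m) {f : Fin m → Fin n}
    (hI : INV n G β f i) : SatFrom β G (pathAdj n) i f := by
  rw [satFrom_ge hge]
  intro u v hadj
  obtain ⟨h1, h2, _⟩ := hI
  have hu : (u:ℕ) < i := by have := u.isLt; omega
  have hv : (v:ℕ) < i := by have := v.isLt; omega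
  have hlam : lamL β ([] : List (Fin m)) = 1 := by simp [lamL]
  have d1 := h1 u v [] hu hv (ILW.base hadj)
  have d2 := h1 v u [] hv hu (ILW.base hadj.symm)
  have dp := h2 u v [] hu hv (ILW.base hadj)
  rw [hlam] at d1 d2
  simp only [List.length_nil] at dp
  unfold valF at d1 d2 dp
  unfold pathAdj
  omega

end Back2

section BackMain

variable {G : SimpleGraph (Fin m)} {β : Fin m → ℕ} {g : Fin m → ℤ} {n : ℕ}

/-- The set of lower bounds for the value of the variable currently being assigned. -/
def LoSet (n : ℕ) (G : SimpleGraph (Fin m)) (β : Fin m → ℕ) (f : Fin m → Fin n)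
    (i : ℕ) (vi : Fin m) (r : ℤ) : Prop :=
  r = 0 ∨ (∃ D, Dem G β (i+1) vi D ∧ r = D) ∨
    (∃ (u : Fin m) (L : List (Fin m)), (u:ℕ) < i ∧ ILW G (i+1) u vi L ∧
      r = valF (f u) - lamL β L)

theorem back_main (hn : 4 ≤ n) (hβ2 : ∀ v, β v = 1 ∨ β v = 2) (hβ1 : ∀ v, 1 ≤ β v)
    (hinf : Sat β G intPathAdj) (hbip : Bipartite G) (hg : IsGamma G β g)
    (hA : ∀ v : Fin m, 2 * g v ≤ (n:ℤ) - 2) :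
    ∀ k i : ℕ, ∀ f : Fin m → Fin n, m - i ≤ k → INV n G β f i →
      SatFrom β G (pathAdj n) i f := by
  classical
  intro k
  induction k with
  | zero =>
      intro i f hk hI
      exact back_hom (by omega) hI
  | succ k ih =>
      intro i f hk hI
      by_cases him : i < m
      swap
      · exact back_hom him hI
      have hmik : m - (i+1) ≤ k := by omega
      obtain ⟨h1, h2, h3⟩ := hI
      set vi : Fin m := ⟨i, him⟩ with hvidef
      have hviv : (vi : ℕ) = i := rfl
      set Lo : ℤ → Prop := LoSet n G β f i vi with hLodef
      have hgvi : 0 ≤ g vi := g_nonneg hβ1 hg vi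
      have hbz2 : (β vi : ℤ) ≤ 2 := by rcases hβ2 vi with h | h <;> rw [h] <;> norm_num
      have hbz1 : 1 ≤ (β vi : ℤ) := by exact_mod_cast hβ1 vi
      have hDbound : ∀ D, Dem G β (i+1) vi D → 2*D + 2*(g vi) ≤ (n:ℤ) - 2 := by
        intro D hD
        obtain ⟨w, hw⟩ := dem_le hβ2 hβ1 hinf hg hD
        have := hA w
        omega
      have hcons : ∀ (u : Fin m) (L : List (Fin m)) (D : ℤ), (u:ℕ) < i →
          ILW G (i+1) u vi L → Dem G β (i+1) vi D →
          Dem G β i u (D + 2*((β vi : ℤ) - 1) - lamL β L) := by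
        intro u L D hu hw hD
        exact Dem.cons (le_of_eq hviv.symm) (by omega) hw hD
      have hanchb : ∀ (u : Fin m) (L : List (Fin m)) (D : ℤ), (u:ℕ) < i →
          ILW G (i+1) u vi L → Dem G β (i+1) vi D →
          D + 2*((β vi : ℤ) - 1) - lamL β L ≤ valF (f u) ∧
            valF (f u) ≤ (n:ℤ) - 1 - (D + 2*((β vi : ℤ) - 1) - lamL β L) :=
        fun u L D hu hw hD => h3 u _ hu (hcons u L D hu hw hD)
      -- maximum of the lower bounds
      have hLo_bdd : ∀ r, Lo r → r ≤ (n:ℤ) - 1 := by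
        intro r hr
        rw [hLodef] at hr
        unfold LoSet at hr
        rcases hr with rfl | ⟨D, hD, he⟩ | ⟨u, L, hu, hw, rfl⟩
        · omega
        · have := hDbound D hD; omega
        · have := (hanchb u L 0 hu hw Dem.nil).2
          omega
      have hLo0 : Lo 0 := by rw [hLodef]; exact Or.inl rfl
      obtain ⟨c₀, hc₀Lo, hc₀max⟩ := Int.exists_greatest_of_bdd ⟨(n:ℤ)-1, hLo_bdd⟩
        ⟨0, hLo0⟩
      have hc₀0 : 0 ≤ c₀ := hc₀max 0 hLo0
      have hLoD : ∀ D, Dem G β (i+1) vi D → Lo D := by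
        intro D hD
        rw [hLodef]; exact Or.inr (Or.inl ⟨D, hD, rfl⟩)
      have hLoA : ∀ (u : Fin m) (L : List (Fin m)), (u:ℕ) < i → ILW G (i+1) u vi L →
          Lo (valF (f u) - lamL β L) := by
        intro u L hu hw
        rw [hLodef]; exact Or.inr (Or.inr ⟨u, L, hu, hw, rfl⟩)
      rw [hLodef] at hc₀Lo
      unfold LoSet at hc₀Lo
      by_cases hanch : ∃ (u : Fin m) (L : List (Fin m)), (u:ℕ) < i ∧ ILW G (i+1) u vi L
      · -- ANCHORED CASE
        obtain ⟨u₀, L₀, hu₀, hL₀⟩ := hanch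
        have hvin0 : (vi : ℕ) ≠ 0 := by omega
        have hgbeta : (β vi : ℤ) - 1 ≤ g vi := g_ge_beta hg hvin0
        set pc : ℤ := valF (f u₀) + (L₀.length : ℤ) + 1 with hpcdef
        obtain ⟨c, hcc₀, hcpar⟩ : ∃ c, (c = c₀ ∨ c = c₀ + 1) ∧ (c - pc) % 2 = 0 := by
          by_cases hali : (c₀ - pc) % 2 = 0
          · exact ⟨c₀, Or.inl rfl, hali⟩
          · exact ⟨c₀ + 1, Or.inr rfl, by omega⟩
        have hc0 : 0 ≤ c := by omega
        -- all anchors are parity-coherent with the chosen anchor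
        have hparanch : ∀ (u : Fin m) (L : List (Fin m)), (u:ℕ) < i →
            ILW G (i+1) u vi L →
            (valF (f u) + (L.length : ℤ) + 1 - pc) % 2 = 0 := by
          intro u L hu hw
          have hW : ILW G i u u₀ (L ++ vi :: L₀.reverse) :=
            ILW.comb (le_of_eq hviv.symm) hw hL₀.reverse
          have := h2 u u₀ _ hu hu₀ hW
          simp only [List.length_append, List.length_cons, List.length_reverse] at this
          rw [hpcdef]
          push_cast at this ⊢
          omega
        -- K1: upper anchored bounds leave room for the doubled pair
        have K1 : ∀ (u : Fin m) (L : List (Fin m)), (u:ℕ) < i → ILW G (i+1) u vi L →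
            c + 2*((β vi : ℤ) - 1) ≤ valF (f u) + lamL β L := by
          intro u L hu hw
          set A : ℤ := valF (f u) + lamL β L - 2*((β vi : ℤ) - 1) with hAdef
          have hAge : ∀ r, Lo r → r ≤ A := by
            intro r hr
            rw [hLodef] at hr
            unfold LoSet at hr
            rcases hr with rfl | ⟨D, hD, he⟩ | ⟨u', L', hu', hw', rfl⟩
            · have := (hanchb u L 0 hu hw Dem.nil).1
              omega
            · have := (hanchb u L D hu hw hD).1
              omega
            · have hWc : ILW G i u' u (L' ++ vi :: L.reverse) :=
                ILW.comb (le_of_eq hviv.symm) hw' hw.reverse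
              have := h1 u' u _ hu' hu hWc
              rw [lamL_append, lamL_reverse] at this
              omega
          have hAc₀ : c₀ ≤ A := hAge c₀ hc₀Lo
          have hApar : (A - pc) % 2 = 0 := by
            have hlp := lamL_parity β L
            have := hparanch u L hu hw
            omega
          omega
        -- K2: wall upper bounds leave room for the doubled pair
        have K2 : ∀ D, Dem G β (i+1) vi D →
            c + 2*((β vi : ℤ) - 1) ≤ (n:ℤ) - 1 - D := by
          intro D hD
          have hDb := hDbound D hD
          rcases hc₀Lo with he | ⟨D₀, hD₀, he⟩ | ⟨u', L', hu', hw', he⟩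
          · omega
          · have := hDbound D₀ hD₀
            omega
          · -- the maximum is an anchored bound: it is parity-aligned, so c = c₀
            have hc₀par : (c₀ - pc) % 2 = 0 := by
              have hlp := lamL_parity β L'
              have := hparanch u' L' hu' hw'
              omega
            have hceq : c = c₀ := by omega
            have := (hanchb u' L' D hu' hw' hD).2
            omega
        have K4 : c + 2*((β vi : ℤ) - 1) ≤ (n:ℤ) - 1 := by
          have := K2 0 Dem.nil
          omega
        -- parity of any value congruent to c against any anchor
        have K7 : ∀ (b : Fin n), (valF b - c) % 2 = 0 →
            ∀ (u : Fin m) (L : List (Fin m)), (u:ℕ) < i → ILW G (i+1) u vi L →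
            (valF b - valF (f u)) % 2 = ((L.length : ℤ) + 1) % 2 := by
          intro b hb u L hu hw
          have := hparanch u L hu hw
          omega
        have hkeyA : ∀ (b : Fin n), c ≤ valF b → valF b ≤ c + 2*((β vi : ℤ) - 1) →
            (valF b - c) % 2 = 0 →
            INV n G β (Function.update f vi b) (i+1) := by
          intro b hbl hbu hbp
          refine inv_update hβ2 hβ1 hinf hbip him ⟨h1, h2, h3⟩ b ?_ ?_ ?_ ?_
          · intro u L hu hw
            have : valF (f u) - lamL β L ≤ c₀ := hc₀max _ (hLoA u L hu hw)
            omega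
          · intro u L hu hw
            have := K1 u L hu hw
            omega
          · intro u L hu hw
            exact K7 b hbp u L hu hw
          · intro D hD
            have h1' : D ≤ c₀ := hc₀max _ (hLoD D hD)
            have h2' := K2 D hD
            omega
        rw [satFrom_lt him]
        rcases hβ2 vi with hb | hb
        · -- β = 1 : play the single value c
          have hcn : c < (n:ℤ) := by
            have := K4; omega
          obtain ⟨b, hbv⟩ : ∃ b : Fin n, valF b = c :=
            ⟨⟨c.toNat, by omega⟩, by simp [valF, Int.toNat_of_nonneg hc0]⟩
          refine ⟨{b}, ?_, ?_⟩
          · rw [Finset.card_singleton, hb]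
          · intro b' hbmem
            rw [Finset.mem_singleton] at hbmem
            subst hbmem
            refine ih (i+1) _ hmik ?_
            exact hkeyA _ (by rw [hbv]) (by rw [hbv]; omega) (by rw [hbv]; omega)
        · -- β = 2 : play the pair {c, c+2}
          have hcn : c + 2 < (n:ℤ) := by
            have := K4; rw [hb] at this; push_cast at this; omega
          obtain ⟨b₁, hv₁⟩ : ∃ b : Fin n, valF b = c :=
            ⟨⟨c.toNat, by omega⟩, by simp [valF, Int.toNat_of_nonneg hc0]⟩
          obtain ⟨b₂, hv₂⟩ : ∃ b : Fin n, valF b = c + 2 :=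
            ⟨⟨(c+2).toNat, by omega⟩, by
              simp [valF, Int.toNat_of_nonneg (show (0:ℤ) ≤ c + 2 by omega)]⟩
          have hbne : b₁ ≠ b₂ := by
            intro he
            have : valF b₁ = valF b₂ := by rw [he]
            omega
          refine ⟨{b₁, b₂}, ?_, ?_⟩
          · rw [Finset.card_pair hbne, hb]
          · intro b hbmem
            rw [Finset.mem_insert, Finset.mem_singleton] at hbmem
            refine ih (i+1) _ hmik ?_
            rcases hbmem with rfl | rfl
            · refine hkeyA _ (by rw [hv₁]) ?_ (by rw [hv₁]; omega)
              rw [hv₁, hb]; push_cast; omega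
            · refine hkeyA _ (by rw [hv₂]; omega) ?_ (by rw [hv₂]; omega)
              rw [hv₂, hb]; push_cast; omega
      · -- FREE CASE : no anchors
        have hnoanch : ∀ (u : Fin m) (L : List (Fin m)), (u:ℕ) < i →
            ILW G (i+1) u vi L → False := by
          intro u L hu hw
          exact hanch ⟨u, L, hu, hw⟩
        have hBup : ∀ D, Dem G β (i+1) vi D →
            c₀ + ((β vi : ℤ) - 1) ≤ (n:ℤ) - 1 - D := by
          intro D hD
          have hDb := hDbound D hD
          rcases hc₀Lo with he | ⟨D₀, hD₀, he⟩ | ⟨u', L', hu', hw', he⟩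
          · omega
          · have := hDbound D₀ hD₀
            omega
          · exact absurd (hnoanch u' L' hu' hw') (fun h => h)
        have hkeyB : ∀ (b : Fin n), c₀ ≤ valF b → valF b ≤ c₀ + ((β vi : ℤ) - 1) →
            INV n G β (Function.update f vi b) (i+1) := by
          intro b hbl hbu
          refine inv_update hβ2 hβ1 hinf hbip him ⟨h1, h2, h3⟩ b ?_ ?_ ?_ ?_
          · intro u L hu hw; exact absurd (hnoanch u L hu hw) (fun h => h)
          · intro u L hu hw; exact absurd (hnoanch u L hu hw) (fun h => h)
          · intro u L hu hw; exact absurd (hnoanch u L hu hw) (fun h => h)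
          · intro D hD
            have h1' : D ≤ c₀ := hc₀max _ (hLoD D hD)
            have h2' := hBup D hD
            omega
        rw [satFrom_lt him]
        rcases hβ2 vi with hb | hb
        · have hcn : c₀ < (n:ℤ) := by
            have := hBup 0 Dem.nil; omega
          obtain ⟨b, hbv⟩ : ∃ b : Fin n, valF b = c₀ :=
            ⟨⟨c₀.toNat, by omega⟩, by simp [valF, Int.toNat_of_nonneg hc₀0]⟩
          refine ⟨{b}, ?_, ?_⟩
          · rw [Finset.card_singleton, hb]
          · intro b' hbmem
            rw [Finset.mem_singleton] at hbmem
            subst hbmem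
            refine ih (i+1) _ hmik (hkeyB _ (by rw [hbv]) ?_)
            rw [hbv]; omega
        · have hcn : c₀ + 1 < (n:ℤ) := by
            have := hBup 0 Dem.nil; rw [hb] at this; push_cast at this; omega
          obtain ⟨b₁, hv₁⟩ : ∃ b : Fin n, valF b = c₀ :=
            ⟨⟨c₀.toNat, by omega⟩, by simp [valF, Int.toNat_of_nonneg hc₀0]⟩
          obtain ⟨b₂, hv₂⟩ : ∃ b : Fin n, valF b = c₀ + 1 :=
            ⟨⟨(c₀+1).toNat, by omega⟩, by
              simp [valF, Int.toNat_of_nonneg (show (0:ℤ) ≤ c₀ + 1 by omega)]⟩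
          have hbne : b₁ ≠ b₂ := by
            intro he
            have : valF b₁ = valF b₂ := by rw [he]
            omega
          refine ⟨{b₁, b₂}, ?_, ?_⟩
          · rw [Finset.card_pair hbne, hb]
          · intro b hbmem
            rw [Finset.mem_insert, Finset.mem_singleton] at hbmem
            refine ih (i+1) _ hmik ?_
            rcases hbmem with rfl | rfl
            · exact hkeyB _ (by omega) (by rw [hv₁, hb]; push_cast; omega)
            · exact hkeyB _ (by omega) (by rw [hv₂, hb]; push_cast; omega)

end BackMain

/-- Let `n ≥ 4` be even, `Ψ` an instance whose constraint graph `G` is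
connected and bipartite, with `P_∞ ⊨ Ψ`.  Then `P_n ⊨ Ψ` iff no vertex `v` has
`γ(v) ≥ n/2` (equivalently `2γ(v) ≥ n`, as `n` is even). -/
theorem evenPath_sat_iff {m n : ℕ} (hn : 4 ≤ n) (hev : Even n)
    (β : Fin m → ℕ) (hβ : ∀ v, β v = 1 ∨ β v = 2) (G : SimpleGraph (Fin m))
    (hconn : G.Connected) (hbip : Bipartite G)
    (hinf : Sat β G intPathAdj)
    (g : Fin m → ℤ) (hg : IsGamma G β g) :
    Sat β G (pathAdj n) ↔ ¬ ∃ v : Fin m, (n : ℤ) ≤ 2 * g v := by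
  have hβ1 : ∀ v, 1 ≤ β v := fun v => by rcases hβ v with h | h <;> omega
  constructor
  · intro hsat
    exact forward_dir hn hβ hβ1 hconn hg hsat
  · intro hno
    have hA : ∀ v : Fin m, 2 * g v ≤ (n:ℤ) - 2 := by
      intro v
      have h1 : ¬ ((n:ℤ) ≤ 2 * g v) := fun h => hno ⟨v, h⟩
      obtain ⟨l, hl⟩ := hev
      have h2 : (n:ℤ) = (l:ℤ) + (l:ℤ) := by exact_mod_cast congrArg (Nat.cast : ℕ → ℤ) hl
      omega
    intro f
    refine back_main hn hβ hβ1 hinf hbip hg hA m 0 f (by omega) ⟨?_, ?_, ?_⟩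
    · intro x z L hx
      omega
    · intro x z L hx
      omega
    · intro u D hu
      omega

end CountingCSP
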